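/- Let F be the free group on generators x, y₁, …, y_k with k ≥ 1 and let m₁, …, m_k be integers. Then the element w = x·y₁x^{m₁}y₁⁻¹·y₂x^{m₂}y₂⁻¹⋯y_k x^{m_k}y_k⁻¹ is not a proper power in F. -/

import Mathlib

open LaurentPolynomial

@[ext]
structure Aff where
  a : LaurentPolynomial ℤ
  s : ℤ

namespace Aff

noncomputable instance : Mul Aff := ⟨fun x y => ⟨x.a + T x.s * y.a, x.s + y.s⟩⟩
noncomputable instance : One Aff := ⟨⟨0, 0⟩⟩
noncomputable instance : Inv Aff := ⟨fun x => ⟨-(T (-x.s) * x.a), -x.s⟩⟩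

@[simp] lemma mul_a (x y : Aff) : (x * y).a = x.a + T x.s * y.a := rfl
@[simp] lemma mul_s (x y : Aff) : (x * y).s = x.s + y.s := rfl
@[simp] lemma one_a : (1 : Aff).a = 0 := rfl
@[simp] lemma one_s : (1 : Aff).s = 0 := rfl
@[simp] lemma inv_a (x : Aff) : x⁻¹.a = -(T (-x.s) * x.a) := rfl
@[simp] lemma inv_s (x : Aff) : x⁻¹.s = -x.s := rfl

noncomputable instance : Group Aff where
  mul_assoc x y z := by
    ext
    · simp only [mul_a, mul_s, T_add]; ring
    · simp [add_assoc]
  one_mul x := by ext <;> simp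
  mul_one x := by ext <;> simp
  inv_mul_cancel x := by ext <;> simp [← T_add]

lemma pow_s (x : Aff) : ∀ n : ℕ, (x ^ n).s = n * x.s
  | 0 => by simp
  | n + 1 => by rw [pow_succ, mul_s, pow_s x n]; push_cast; ring

lemma mk_zero_mul (c d : LaurentPolynomial ℤ) :
    (⟨c, 0⟩ : Aff) * ⟨d, 0⟩ = ⟨c + d, 0⟩ := by ext <;> simp

lemma mk_zero_pow (c : LaurentPolynomial ℤ) : ∀ n : ℕ, (⟨c, 0⟩ : Aff) ^ n = ⟨n • c, 0⟩
  | 0 => by ext <;> simp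
  | n + 1 => by
    rw [pow_succ, mk_zero_pow c n, mk_zero_mul, succ_nsmul]

lemma mk_zero_inv (c : LaurentPolynomial ℤ) : (⟨c, 0⟩ : Aff)⁻¹ = ⟨-c, 0⟩ := by
  ext <;> simp

lemma mk_zero_zpow (c : LaurentPolynomial ℤ) : ∀ n : ℤ, (⟨c, 0⟩ : Aff) ^ n = ⟨n • c, 0⟩
  | (n : ℕ) => by rw [zpow_natCast, mk_zero_pow]; norm_cast
  | Int.negSucc n => by
    rw [zpow_negSucc, mk_zero_pow, mk_zero_inv]
    congr 1
    rw [Int.negSucc_eq]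
    module

lemma list_prod_mk {α : Type*} (h : α → LaurentPolynomial ℤ) :
    ∀ l : List α, (l.map fun i => (⟨h i, 0⟩ : Aff)).prod = ⟨(l.map h).sum, 0⟩
  | [] => rfl
  | a :: l => by
    simp only [List.map_cons, List.prod_cons, List.sum_cons, list_prod_mk h l, mk_zero_mul]

end Aff

/-- evaluation of a Laurent polynomial at coefficient 0, as an `AddMonoidHom`. -/
noncomputable def coeff0 : LaurentPolynomial ℤ →+ ℤ :=
  (Finsupp.applyAddHom (0 : ℤ)).comp AddMonoidAlgebra.coeffAddEquiv.toAddMonoidHom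

@[simp] lemma coeff0_T (n : ℤ) : coeff0 (T n) = if n = 0 then 1 else 0 := by
  show (T n : LaurentPolynomial ℤ).coeff 0 = _
  simp [Finsupp.single_apply]

@[simp] lemma coeff0_one : coeff0 1 = 1 := by
  rw [← T_zero, coeff0_T, if_pos rfl]

/-- In the free group on `x, y₁, …, y_k` (`k ≥ 1`), the element
`w = x · y₁ x^{m₁} y₁⁻¹ ⋯ y_k x^{m_k} y_k⁻¹` is not a proper power. -/
theorem stmt6 (k : ℕ) (hk : 1 ≤ k) (m : Fin k → ℤ)
    (x : FreeGroup (Fin (k + 1))) (hx : x = FreeGroup.of 0)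
    (y : Fin k → FreeGroup (Fin (k + 1))) (hy : ∀ i, y i = FreeGroup.of i.succ)
    (w : FreeGroup (Fin (k + 1)))
    (hw : w = x * ((List.finRange k).map (fun i => y i * x ^ (m i) * (y i)⁻¹)).prod) :
    ∀ (u : FreeGroup (Fin (k + 1))) (p : ℕ), 2 ≤ p → w ≠ u ^ p := by
  intro u p hp hwu
  -- the homomorphism to Aff
  set f : Fin (k + 1) → Aff := fun j => if j = 0 then ⟨1, 0⟩ else ⟨0, 1⟩ with hf
  set φ := FreeGroup.lift f with hφ
  have hφx : φ x = ⟨1, 0⟩ := by rw [hx]; simp [hφ, hf]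
  have hφy : ∀ i, φ (y i) = ⟨0, 1⟩ := by
    intro i
    rw [hy i]
    simp [hφ, hf, Fin.succ_ne_zero]
  -- image of each conjugate
  have hconj : ∀ i : Fin k, φ (y i * x ^ (m i) * (y i)⁻¹) = ⟨(m i) • T 1, 0⟩ := by
    intro i
    rw [map_mul, map_mul, map_inv, map_zpow, hφx, hφy, Aff.mk_zero_zpow]
    ext <;> simp [smul_comm]
  -- image of w
  have hφw : φ w = ⟨1 + ((List.finRange k).map fun i => (m i) • T 1).sum, 0⟩ := by
    rw [hw, map_mul, map_list_prod, List.map_map, hφx]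
    have : (List.map (φ ∘ fun i => y i * x ^ m i * (y i)⁻¹) (List.finRange k))
        = (List.finRange k).map fun i => (⟨(m i) • T 1, 0⟩ : Aff) := by
      apply List.map_congr_left
      intro i _
      exact hconj i
    rw [this, Aff.list_prod_mk (fun i => (m i) • T 1)]
    ext <;> simp
  -- the shift of φ u is 0
  have hs : (φ u).s = 0 := by
    have := congrArg Aff.s (hφw ▸ (hwu ▸ (map_pow φ u p)).symm)
    rw [Aff.pow_s] at this
    simp only at this
    rcases mul_eq_zero.mp this with h | h
    · exact absurd h (by positivity)
    · exact h
  have hu : φ u = ⟨(φ u).a, 0⟩ := by ext <;> simp [hs]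
  -- compare a-components
  have ha : 1 + ((List.finRange k).map fun i => (m i) • T 1).sum = p • (φ u).a := by
    have := (hwu ▸ (map_pow φ u p)).symm.trans hφw
    rw [hu, Aff.mk_zero_pow] at this
    exact (congrArg Aff.a this).symm
  -- apply coeff0
  have key := congrArg coeff0 ha
  rw [map_add, map_nsmul, coeff0_one, map_list_sum, List.map_map] at key
  have hz : ((List.finRange k).map (coeff0 ∘ fun i => (m i) • T 1)).sum = 0 := by
    apply List.sum_eq_zero
    intro z hz
    rw [List.mem_map] at hz
    obtain ⟨i, _, rfl⟩ := hz
    show coeff0 (m i • T 1) = 0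
    rw [map_zsmul, coeff0_T]
    norm_num
  rw [hz, add_zero, nsmul_eq_mul] at key
  -- p * something = 1 in ℤ with p ≥ 2 : contradiction
  have : (p : ℤ) ∣ 1 := ⟨coeff0 (φ u).a, key⟩
  have := Int.le_of_dvd one_pos this
  omega
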